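/- Let A be a commutative ring, n ≥ 1, S a set with a distinguished element s₁, and A[Y] the polynomial ring over A in variables Y_s (s ∈ S). Let φ : A[Y] → M_n(A) be an A-algebra homomorphism, write C = φ(Y_{s₁}), and let e_1, …, e_n be the standard basis column vectors. Then C^{i−1}·e_1 = e_i for i = 1, …, n (equivalently, the composite sending the i-th basis vector through β₁(T_i) = Y_{s₁}^{i−1}, then φ, then evaluation at e_1, is the identity) if and only if C·e_j = e_{j+1} for j = 1, …, n−1 (so C has companion form with arbitrary last column) and, for every s ∈ S, φ(Y_s) lies in the A-span of I_n, C, C², …, C^{n−1}. -/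
import Mathlib


/-- Let `A` be a commutative ring, `n ≥ 1`, `S` a set with a
distinguished element `s₁`, `φ : A[Y_s : s ∈ S] → M_n(A)` an `A`-algebra homomorphism,
and `C = φ Y_{s₁}`.  Then `C^{i−1}·e₁ = e_i` for `i = 1, …, n` if and only if
`C·e_j = e_{j+1}` for `j = 1, …, n−1` (companion form with arbitrary last column) and
every `φ Y_s` lies in the `A`-span of `Iₙ, C, …, C^{n−1}`. -/
theorem stmt13 {A : Type*} [CommRing A] (n : ℕ) (hn : 0 < n)
    {S : Type*} (s₁ : S)
    (φ : MvPolynomial S A →ₐ[A] Matrix (Fin n) (Fin n) A)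
    (C : Matrix (Fin n) (Fin n) A) (hC : C = φ (MvPolynomial.X s₁)) :
    (∀ i : Fin n,
        (C ^ (i : ℕ)).mulVec (Pi.single (⟨0, hn⟩ : Fin n) 1) = Pi.single i 1)
    ↔ ((∀ (j : Fin n) (h : (j : ℕ) + 1 < n),
          C.mulVec (Pi.single j 1) = Pi.single (⟨(j : ℕ) + 1, h⟩ : Fin n) 1)
        ∧ ∀ s : S,
          φ (MvPolynomial.X s) ∈
            Submodule.span A (Set.range fun i : Fin n => C ^ (i : ℕ))) := by
  set e1 : Fin n → A := Pi.single (⟨0, hn⟩ : Fin n) 1 with he1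
  have hcolentry : ∀ (N : Matrix (Fin n) (Fin n) A) (i j : Fin n),
      (N.mulVec (Pi.single j 1)) i = N i j := by
    intro N i j
    simp [Matrix.mulVec_single]
  constructor
  · intro h
    constructor
    · intro j hj
      rw [← h j, Matrix.mulVec_mulVec, ← pow_succ']
      have := h ⟨(j : ℕ) + 1, hj⟩
      simpa using this
    · intro s
      set M := φ (MvPolynomial.X s) with hM
      have hcomm : ∀ k : ℕ, M * C ^ k = C ^ k * M := by
        intro k
        apply Commute.pow_right
        show M * C = C * M
        rw [hM, hC, ← map_mul, ← map_mul, mul_comm]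
      set a : Fin n → A := M.mulVec e1 with ha
      have hsymm : ∀ (k j i : Fin n), (C ^ (k : ℕ)) i j = (C ^ (j : ℕ)) i k := by
        intro k j i
        rw [← hcolentry (C ^ (k : ℕ)) i j, ← h j, Matrix.mulVec_mulVec,
          pow_mul_comm, ← Matrix.mulVec_mulVec, h k, hcolentry]
      have key : M = ∑ k : Fin n, a k • C ^ (k : ℕ) := by
        ext i j
        have hMij : M i j = ∑ k : Fin n, (C ^ (j : ℕ)) i k * a k := by
          rw [← hcolentry M i j, ← h j, Matrix.mulVec_mulVec, hcomm,
            ← Matrix.mulVec_mulVec, ← ha]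
          rfl
        rw [hMij]
        simp only [Matrix.sum_apply, Matrix.smul_apply, smul_eq_mul]
        exact Finset.sum_congr rfl fun k _ => by rw [hsymm k j i, mul_comm]
      rw [key]
      refine Submodule.sum_mem _ fun k _ => Submodule.smul_mem _ _ ?_
      exact Submodule.subset_span ⟨k, rfl⟩
  · rintro ⟨h1, -⟩
    rintro ⟨i, hi⟩
    induction i with
    | zero =>
      rw [pow_zero, Matrix.one_mulVec]
    | succ k ih =>
      have hk : k < n := Nat.lt_of_succ_lt hi
      rw [pow_succ', ← Matrix.mulVec_mulVec, ih hk]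
      exact h1 ⟨k, hk⟩ hi
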